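/- Let ν : [0,∞) → [0,∞) be a function such that ζ ↦ ν(ζ)ζ is strongly monotone with constant m_ν > 0. Then for all vectors b₁, b₂ ∈ ℝ³ (with the Euclidean inner product ⟨·,·⟩ and norm ‖·‖₂) one has ⟨ν(‖b₁‖₂)b₁ − ν(‖b₂‖₂)b₂, b₁ − b₂⟩ ≥ m_ν ‖b₁ − b₂‖₂². -/
import Mathlib


open RealInnerProductSpace

/-- Pointwise strong monotonicity of the vector field `b ↦ ν(‖b‖)·b` on `ℝ³`:
if `ζ ↦ ν ζ * ζ` is strongly monotone with constant `mν > 0` on `[0,∞)`, then for all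
`b₁, b₂ ∈ ℝ³`, `⟪ν(‖b₁‖) b₁ − ν(‖b₂‖) b₂, b₁ − b₂⟫ ≥ mν ‖b₁ − b₂‖²`. -/
theorem pointwise_strong_monotonicity (ν : ℝ → ℝ) (mν : ℝ) (hmν : 0 < mν)
    (hν_nonneg : ∀ ζ : ℝ, 0 ≤ ζ → 0 ≤ ν ζ)
    (hmono : ∀ ζ ς : ℝ, 0 ≤ ζ → 0 ≤ ς →
      (ν ζ * ζ - ν ς * ς) * (ζ - ς) ≥ mν * (ζ - ς) ^ 2)
    (b₁ b₂ : EuclideanSpace ℝ (Fin 3)) :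
    ⟪ν ‖b₁‖ • b₁ - ν ‖b₂‖ • b₂, b₁ - b₂⟫ ≥ mν * ‖b₁ - b₂‖ ^ 2 := by
  set n1 := ‖b₁‖ with hn1
  set n2 := ‖b₂‖ with hn2
  have hn1' : (0:ℝ) ≤ n1 := norm_nonneg _
  have hn2' : (0:ℝ) ≤ n2 := norm_nonneg _
  set a := ν n1 with ha
  set b := ν n2 with hb
  have hip : ⟪b₁, b₂⟫ = ⟪b₂, b₁⟫ := real_inner_comm _ _
  have hexp : ⟪ν n1 • b₁ - ν n2 • b₂, b₁ - b₂⟫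
      = a * n1 ^ 2 + b * n2 ^ 2 - (a + b) * ⟪b₁, b₂⟫ := by
    simp only [inner_sub_left, inner_sub_right, real_inner_smul_left,
      real_inner_self_eq_norm_sq, hip]
    ring
  have hnorm : ‖b₁ - b₂‖ ^ 2 = n1 ^ 2 - 2 * ⟪b₁, b₂⟫ + n2 ^ 2 := by
    rw [hn1, hn2, @norm_sub_sq_real]
  have hC : (a + b - 2 * mν) * ⟪b₁, b₂⟫ ≤ (a + b - 2 * mν) * (n1 * n2) := by
    rcases eq_or_ne b₁ 0 with h1 | h1
    · simp [h1, hn1]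
    rcases eq_or_ne b₂ 0 with h2 | h2
    · simp [h2, hn2]
    have hn1pos : 0 < n1 := norm_pos_iff.mpr h1
    have hn2pos : 0 < n2 := norm_pos_iff.mpr h2
    have ha' : mν ≤ a := by
      rw [ha]
      nlinarith [hmono n1 0 hn1' le_rfl, mul_pos hn1pos hn1pos]
    have hb' : mν ≤ b := by
      rw [hb]
      nlinarith [hmono n2 0 hn2' le_rfl, mul_pos hn2pos hn2pos]
    have hcs : ⟪b₁, b₂⟫ ≤ n1 * n2 := real_inner_le_norm b₁ b₂
    have hcoeff : 0 ≤ a + b - 2 * mν := by linarith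
    exact mul_le_mul_of_nonneg_left hcs hcoeff
  have hkey := hmono n1 n2 hn1' hn2'
  rw [hexp, hnorm]
  nlinarith [hkey, hC]
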